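/- If a set U of n×n 0-1 matrices, each with exactly one unit per row and at most one unit outside a fixed column q, is such that its distinct members are pairwise not q-equivalent and each has exactly n−1 units in column q, then the matrices in U are linearly independent over ℚ and |U| ≤ n; moreover every nonzero matrix of a word lying in the ℚ-span of U is already a member of U. -/

import Mathlib

/-- The 0-1 matrix of a mapping `f` of an `n`-element set
(the matrix of a word acting on the states of a DFA). -/
def matOf {n : ℕ} (f : Fin n → Fin n) : Matrix (Fin n) (Fin n) ℚ :=
  fun i j => if f i = j then 1 else 0

lemma matOf_apply {n : ℕ} (f : Fin n → Fin n) (i j : Fin n) :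
    matOf f i j = if f i = j then 1 else 0 := rfl

lemma matOf_rowsum {n : ℕ} (f : Fin n → Fin n) (i : Fin n) :
    ∑ j, matOf f i j = 1 := by
  simp [matOf_apply]

/-- Let `U` be a set of matrices of words, each with exactly `n − 1` units
in column `q` (hence exactly one unit outside column `q`), pairwise not
`q`-equivalent. Then the matrices of `U` are linearly independent,
`|U| ≤ n`, and every nonzero matrix of a word lying in the ℚ-span of `U`
is already a member of `U`. -/
theorem near_sync_matrices {n : ℕ} (q : Fin n)
    (U : Set (Matrix (Fin n) (Fin n) ℚ))
    (hword : ∀ M ∈ U, ∃ f : Fin n → Fin n, M = matOf f)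
    (hcol : ∀ M ∈ U,
      (Finset.univ.filter fun i : Fin n => M i q = 1).card = n - 1)
    (hne : ∀ M ∈ U, ∀ N ∈ U, M ≠ N → ∃ i, M i q ≠ N i q) :
    LinearIndependent ℚ ((↑) : U → Matrix (Fin n) (Fin n) ℚ) ∧
    U.ncard ≤ n ∧
    ∀ f : Fin n → Fin n, matOf f ≠ 0 →
      matOf f ∈ Submodule.span ℚ U → matOf f ∈ U := by
  classical
  have hn : 0 < n := q.pos
  -- structural description of elements of U
  have hstruct : ∀ M ∈ U, ∃ f : Fin n → Fin n, ∃ r : Fin n,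
      M = matOf f ∧ f r ≠ q ∧ ∀ i, i ≠ r → f i = q := by
    intro M hM
    obtain ⟨f, rfl⟩ := hword M hM
    have hc := hcol (matOf f) hM
    have hfilter : (Finset.univ.filter fun i : Fin n => matOf f i q = 1)
        = Finset.univ.filter fun i : Fin n => f i = q := by
      apply Finset.filter_congr
      intro i _
      by_cases h : f i = q <;> simp [matOf_apply, h]
    rw [hfilter] at hc
    have hadd := Finset.card_filter_add_card_filter_not
      (s := (Finset.univ : Finset (Fin n))) (fun i : Fin n => f i = q)
    rw [Finset.card_univ, Fintype.card_fin] at hadd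
    have hone : (Finset.univ.filter fun i : Fin n => ¬ f i = q).card = 1 := by
      omega
    obtain ⟨r, hr⟩ := Finset.card_eq_one.mp hone
    refine ⟨f, r, rfl, ?_, ?_⟩
    · have : r ∈ Finset.univ.filter fun i : Fin n => ¬ f i = q := by
        rw [hr]; exact Finset.mem_singleton_self r
      exact (Finset.mem_filter.mp this).2
    · intro i hi
      by_contra hiq
      have : i ∈ Finset.univ.filter fun i : Fin n => ¬ f i = q :=
        Finset.mem_filter.mpr ⟨Finset.mem_univ i, hiq⟩
      rw [hr, Finset.mem_singleton] at this
      exact hi this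
  -- choice of word and exceptional row for each member of U
  set F : U → (Fin n → Fin n) := fun M => (hstruct M.1 M.2).choose with hFdef
  set R : U → Fin n := fun M => (hstruct M.1 M.2).choose_spec.choose with hRdef
  have hF : ∀ M : U, (M : Matrix (Fin n) (Fin n) ℚ) = matOf (F M) ∧
      F M (R M) ≠ q ∧ ∀ i, i ≠ R M → F M i = q :=
    fun M => (hstruct M.1 M.2).choose_spec.choose_spec
  -- injectivity of the exceptional row
  have hRinj : Function.Injective R := by
    intro M N hr
    by_contra hMN
    have hMNval : (M : Matrix (Fin n) (Fin n) ℚ) ≠ (N : Matrix (Fin n) (Fin n) ℚ) :=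
      fun h => hMN (Subtype.ext h)
    obtain ⟨i, hi⟩ := hne M.1 M.2 N.1 N.2 hMNval
    apply hi
    rw [(hF M).1, (hF N).1]
    rcases eq_or_ne i (R M) with h | h
    · subst h
      rw [matOf_apply, matOf_apply, if_neg (hF M).2.1, if_neg (by rw [hr]; exact (hF N).2.1)]
    · rw [matOf_apply, matOf_apply, if_pos ((hF M).2.2 i h),
        if_pos ((hF N).2.2 i (by rw [← hr]; exact h))]
  -- entry evaluation of a finite linear combination at the witness entry of M
  have heval : ∀ (s : Finset (Matrix (Fin n) (Fin n) ℚ)) (c : Matrix (Fin n) (Fin n) ℚ → ℚ),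
      ↑s ⊆ U → ∀ M : U,
      (∑ m ∈ s, c m • m) (R M) (F M (R M)) = if (M : Matrix (Fin n) (Fin n) ℚ) ∈ s then c M.1 else 0 := by
    intro s c hsub M
    have happ : (∑ m ∈ s, c m • m) (R M) (F M (R M))
        = ∑ m ∈ s, c m * m (R M) (F M (R M)) := by
      rw [Matrix.sum_apply]
      rfl
    rw [happ]
    rcases Finset.decidableMem (M : Matrix (Fin n) (Fin n) ℚ) s with hMs | hMs
    · -- M ∉ s
      rw [if_neg hMs]
      apply Finset.sum_eq_zero
      intro m hm
      have hmU : m ∈ U := hsub hm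
      set N : U := ⟨m, hmU⟩ with hNdef
      have hNM : N ≠ M := fun h => hMs (by rw [← h]; exact hm)
      have hrne : R N ≠ R M := fun h => hNM (hRinj h)
      have : m (R M) (F M (R M)) = 0 := by
        have : m = matOf (F N) := (hF N).1
        rw [this, matOf_apply, if_neg]
        rw [(hF N).2.2 (R M) (fun h => hrne h.symm)]
        exact fun h => (hF M).2.1 h.symm
      rw [this, mul_zero]
    · rw [if_pos hMs]
      rw [Finset.sum_eq_single (M : Matrix (Fin n) (Fin n) ℚ)]
      · have : (M : Matrix (Fin n) (Fin n) ℚ) (R M) (F M (R M)) = 1 := by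
          rw [(hF M).1, matOf_apply, if_pos rfl]
        rw [this, mul_one]
      · intro m hm hmM
        have hmU : m ∈ U := hsub hm
        set N : U := ⟨m, hmU⟩ with hNdef
        have hNM : N ≠ M := fun h => hmM (congrArg Subtype.val h)
        have hrne : R N ≠ R M := fun h => hNM (hRinj h)
        have : m (R M) (F M (R M)) = 0 := by
          have : m = matOf (F N) := (hF N).1
          rw [this, matOf_apply, if_neg]
          rw [(hF N).2.2 (R M) (fun h => hrne h.symm)]
          exact fun h => (hF M).2.1 h.symm
        rw [this, mul_zero]
      · intro h; exact absurd hMs h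
  -- linear independence
  have hLI : LinearIndependent ℚ ((↑) : U → Matrix (Fin n) (Fin n) ℚ) := by
    rw [linearIndependent_iff]
    intro l hl
    ext M
    have h0 : (Finsupp.linearCombination ℚ ((↑) : U → Matrix (Fin n) (Fin n) ℚ)) l
        = ∑ N ∈ l.support, (l N) • (N : Matrix (Fin n) (Fin n) ℚ) := by
      rw [Finsupp.linearCombination_apply, Finsupp.sum]
    -- rewrite the subtype-indexed sum as a matrix-indexed sum
    have himg : ∑ N ∈ l.support, (l N) • (N : Matrix (Fin n) (Fin n) ℚ)
        = ∑ m ∈ l.support.image (fun N : U => (N : Matrix (Fin n) (Fin n) ℚ)),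
            (fun m => if h : m ∈ U then l ⟨m, h⟩ else 0) m • m := by
      rw [Finset.sum_image (by intro x _ y _ h; exact Subtype.ext h)]
      apply Finset.sum_congr rfl
      intro N _
      simp only [dif_pos N.2]
    have hsub : ↑(l.support.image (fun N : U => (N : Matrix (Fin n) (Fin n) ℚ))) ⊆ U := by
      intro m hm
      simp only [Finset.coe_image, Set.mem_image] at hm
      obtain ⟨N, _, rfl⟩ := hm
      exact N.2
    have := heval (l.support.image (fun N : U => (N : Matrix (Fin n) (Fin n) ℚ)))
      (fun m => if h : m ∈ U then l ⟨m, h⟩ else 0) hsub M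
    rw [← himg, ← h0, hl] at this
    simp only [Matrix.zero_apply] at this
    by_cases hM : M ∈ l.support
    · have hmem : (M : Matrix (Fin n) (Fin n) ℚ) ∈
          l.support.image (fun N : U => (N : Matrix (Fin n) (Fin n) ℚ)) :=
        Finset.mem_image_of_mem _ hM
      rw [if_pos hmem, dif_pos M.2] at this
      simpa using this.symm
    · simpa using Finsupp.notMem_support_iff.mp hM
  refine ⟨hLI, ?_, ?_⟩
  · -- cardinality bound
    have : Finite U := Finite.of_injective R hRinj
    calc U.ncard = Nat.card U := (Nat.card_coe_set_eq U).symm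
    _ ≤ Nat.card (Fin n) := Nat.card_le_card_of_injective R hRinj
    _ = n := by simp
  · -- span membership
    intro f hf0 hspan
    obtain ⟨c, hsupp, hsum⟩ := Submodule.mem_span_set.mp hspan
    have hcsum : c.sum (fun mi r => r • mi) = ∑ m ∈ c.support, c m • m := rfl
    rw [hcsum] at hsum
    -- each coefficient on the support equals 1
    have hcoef : ∀ m ∈ c.support, c m = 1 := by
      intro m hm
      set M : U := ⟨m, hsupp hm⟩ with hMdef
      have := heval c.support c hsupp M
      rw [if_pos hm, hsum, matOf_apply] at this
      rcases eq_or_ne (f (R M)) (F M (R M)) with h | h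
      · rw [if_pos h] at this; exact this.symm
      · rw [if_neg h] at this
        exact absurd this.symm (Finsupp.mem_support_iff.mp hm)
    -- the coefficients sum to 1 (row sums)
    have hentry : ∀ j, (∑ m ∈ c.support, c m • m) q j = ∑ m ∈ c.support, c m * m q j := by
      intro j
      rw [Matrix.sum_apply]
      rfl
    have hrow : ∑ m ∈ c.support, c m = 1 := by
      have h1 : ∑ j, (∑ m ∈ c.support, c m • m) q j = 1 := by
        rw [hsum]; exact matOf_rowsum f q
      have h2 : ∑ j, (∑ m ∈ c.support, c m • m) q j = ∑ m ∈ c.support, c m := by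
        calc ∑ j, (∑ m ∈ c.support, c m • m) q j
            = ∑ j, ∑ m ∈ c.support, c m * m q j := by
              exact Finset.sum_congr rfl fun j _ => hentry j
          _ = ∑ m ∈ c.support, ∑ j, c m * m q j := Finset.sum_comm
          _ = ∑ m ∈ c.support, c m := by
              apply Finset.sum_congr rfl
              intro m hm
              obtain ⟨g, hg⟩ := hword m (hsupp hm)
              rw [← Finset.mul_sum, hg, matOf_rowsum, mul_one]
      rw [← h2, h1]
    have hcard : c.support.card = 1 := by
      have : ∑ m ∈ c.support, c m = (c.support.card : ℚ) := by
        rw [Finset.sum_congr rfl hcoef]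
        simp
      rw [hrow] at this
      exact_mod_cast this.symm
    obtain ⟨m0, hm0⟩ := Finset.card_eq_one.mp hcard
    have hm0U : m0 ∈ U := hsupp (by rw [hm0]; exact Finset.mem_singleton_self m0)
    have : matOf f = m0 := by
      rw [← hsum, hm0, Finset.sum_singleton,
        hcoef m0 (by rw [hm0]; exact Finset.mem_singleton_self m0), one_smul]
    rw [this]
    exact hm0U
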